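/- Let A = (a_{ij}) be a symmetrizable generalized Cartan matrix indexed by a finite set I such that every 2×2 principal submatrix A|_{i,j} (i≠j) is one of A₁⊕A₁ = [[2,0],[0,2]], A₂ = [[2,−1],[−1,2]], B₂ = [[2,−2],[−1,2]] or its transpose. Let X and X' be A-regular graphs, each satisfying (S6),(S7),(S8),(S9) for every ordered pair (i,j) with A|_{i,j}=B₂, with maximum elements x₀ ∈ X and x'₀ ∈ X' respectively. If φ_i(x₀) = φ_i(x'₀) for all i ∈ I, then there exists a unique isomorphism of I-colored directed graphs X → X' (i.e. a unique bijection h : X → X' such that for all i ∈ I and x,y ∈ X, f̃_i x = y if and only if f̃_i h(x) = h(y)). -/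

import Mathlib

def iterOpt {X : Type*} (g : X → Option X) : ℕ → X → Option X
  | 0, x => some x
  | n+1, x => (g x).bind (iterOpt g n)

def chainOpt {X I : Type*} (g : I → X → Option X) (w : List I) (x : X) : Option X :=
  w.foldr (fun i o => o.bind (g i)) (some x)

/-- A good I-colored directed graph: partial operators `e i`, `f i` that are mutually
inverse partial bijections, together with the (finite) string lengths `eps`, `phi`. -/
structure GoodGraph (I : Type*) (X : Type*) where
  e : I → X → Option X
  f : I → X → Option X
  eps : I → X → ℕ
  phi : I → X → ℕ
  ef : ∀ i x y, e i y = some x ↔ f i x = some y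
  eps_ne : ∀ i x, iterOpt (e i) (eps i x) x ≠ none
  eps_top : ∀ i x, iterOpt (e i) (eps i x + 1) x = none
  phi_ne : ∀ i x, iterOpt (f i) (phi i x) x ≠ none
  phi_top : ∀ i x, iterOpt (f i) (phi i x + 1) x = none

/-- Maximum element: no incoming arrows, and every element reachable from it. -/
def IsMaxElem {I X : Type*} (G : GoodGraph I X) (x0 : X) : Prop :=
  (∀ i, G.e i x0 = none) ∧ ∀ x, ∃ w : List I, chainOpt G.f w x0 = some x

/-- Homogeneous local confluence property. -/
def HLC {I X : Type*} (G : GoodGraph I X) : Prop :=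
  ∀ (x : X) (i j : I), i ≠ j → G.e i x ≠ none → G.e j x ≠ none →
    ∃ (w w' : List I) (z : X), 2 ≤ w.length ∧
      (w : Multiset I) = (w' : Multiset I) ∧
      w.getLast? = some i ∧ w'.getLast? = some j ∧
      chainOpt G.e w x = some z ∧ chainOpt G.e w' x = some z

def axS2 {I X : Type*} (A : I → I → ℤ) (G : GoodGraph I X) : Prop :=
  ∀ i j : I, i ≠ j → ∀ x y : X, G.e i x = some y →
    ((G.phi j y : ℤ) - G.phi j x) - ((G.eps j y : ℤ) - G.eps j x) = A j i

def axS3 {I X : Type*} (G : GoodGraph I X) : Prop :=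
  ∀ i j : I, i ≠ j → ∀ x y : X, G.e i x = some y →
    G.phi j y ≤ G.phi j x ∧ G.eps j x ≤ G.eps j y

def axS4 {I X : Type*} (G : GoodGraph I X) : Prop :=
  ∀ i j : I, i ≠ j → ∀ x xi xj : X, G.e i x = some xi → G.e j x = some xj →
    ((G.eps j xi = G.eps j x →
        ∃ z, G.e j xi = some z ∧ G.e i xj = some z ∧ G.phi i xi = G.phi i z) ∧
     (G.eps j xi = G.eps j x + 1 → G.eps i xj = G.eps i x + 1 →
        ∃ z zi zj, chainOpt G.e [i, j, j, i] x = some z ∧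
          chainOpt G.e [j, i, i, j] x = some z ∧
          G.f i z = some zi ∧ G.f j z = some zj ∧
          G.phi j zi = G.phi j z + 1 ∧ G.phi i zj = G.phi i z + 1))

def axS5 {I X : Type*} (G : GoodGraph I X) : Prop :=
  ∀ i j : I, i ≠ j → ∀ x xi xj : X, G.f i x = some xi → G.f j x = some xj →
    ((G.phi j xi = G.phi j x →
        ∃ z, G.f j xi = some z ∧ G.f i xj = some z ∧ G.eps i xi = G.eps i z) ∧
     (G.phi j xi = G.phi j x + 1 → G.phi i xj = G.phi i x + 1 →
        ∃ z zi zj, chainOpt G.f [i, j, j, i] x = some z ∧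
          chainOpt G.f [j, i, i, j] x = some z ∧
          G.e i z = some zi ∧ G.e j z = some zj ∧
          G.eps j zi = G.eps j z + 1 ∧ G.eps i zj = G.eps i z + 1))

/-- `X` is `A`-regular. -/
def ARegular {I X : Type*} (A : I → I → ℤ) (G : GoodGraph I X) : Prop :=
  axS2 A G ∧ axS3 G ∧ axS4 G ∧ axS5 G

/-- (S6), for the ordered pair (i,j) with a_{ij} = -2, a_{ji} = -1. -/
def axS6 {I X : Type*} (G : GoodGraph I X) (i j : I) : Prop :=
  ∀ x xi xj : X, G.e i x = some xi → G.e j x = some xj →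
    G.eps j xi = G.eps j x + 1 → G.eps i xj = G.eps i x + 2 →
    ∃ y y', chainOpt G.e [i, i, j] x = some y ∧
      chainOpt G.e [i, i, j, j, i] x = some y' ∧
      ∀ fy fy', G.f i y = some fy → G.f i y' = some fy' →
        (¬ (G.phi j fy = G.phi j y + 1 ∧ G.phi j fy' = G.phi j y')) ∧
        (G.phi j fy = G.phi j y + 1 → G.phi j fy' = G.phi j y' + 1 →
          ∃ t, G.e i y = some t ∧ G.f j y' = some t ∧ G.phi i t = G.phi i y' + 1) ∧
        (G.phi j fy = G.phi j y → G.phi j fy' = G.phi j y' + 1 →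
          ∃ z zi zj, chainOpt G.e [j, i, i, i, j, j, i] x = some z ∧
            chainOpt G.e [i, j, j, i, i, i, j] x = some z ∧
            G.f i z = some zi ∧ G.f j z = some zj ∧
            G.phi j zi = G.phi j z + 1 ∧ G.phi i zj = G.phi i z + 2) ∧
        (G.phi j fy = G.phi j y → G.phi j fy' = G.phi j y' →
          ∃ t, G.e i y = some t ∧ G.f j y' = some t ∧ G.phi i t = G.phi i y' + 2 ∧
            ∃ u v, chainOpt G.f [i, i] y' = some u ∧ G.f j u = some v ∧
              G.phi i v = G.phi i u)

/-- (S7). -/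
def axS7 {I X : Type*} (G : GoodGraph I X) (i j : I) : Prop :=
  ∀ x xi xj : X, G.f i x = some xi → G.f j x = some xj →
    G.phi j xi = G.phi j x + 1 → G.phi i xj = G.phi i x + 2 →
    ∃ y y', chainOpt G.f [i, i, j] x = some y ∧
      chainOpt G.f [i, i, j, j, i] x = some y' ∧
      ∀ ey ey', G.e i y = some ey → G.e i y' = some ey' →
        G.eps j ey = G.eps j y → G.eps j ey' = G.eps j y' + 1 →
        ∃ z, chainOpt G.f [j, i, i, i, j, j, i] x = some z ∧
          chainOpt G.f [i, j, j, i, i, i, j] x = some z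

/-- (S8). -/
def axS8 {I X : Type*} (G : GoodGraph I X) (i j : I) : Prop :=
  ∀ x xi xj : X, G.f i x = some xi → G.f j x = some xj →
    G.phi j xi = G.phi j x + 1 → G.phi i xj = G.phi i x + 1 → 2 ≤ G.phi i x →
    ∃ z, chainOpt G.f [i, j, j, i, i] x = some z ∧
      chainOpt G.f [j, i, i, i, j] x = some z

/-- (S9). -/
def axS9 {I X : Type*} (G : GoodGraph I X) (i j : I) : Prop :=
  ∀ x xi xj : X, G.f i x = some xi → G.f j x = some xj →
    G.phi j xi = G.phi j x → G.phi i xj = G.phi i x + 2 →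
    ∀ v u, chainOpt G.f [i, i] x = some v → G.f j v = some u → G.phi i u = G.phi i v →
    ∃ z, chainOpt G.f [i, j, j, i, i] x = some z ∧
      chainOpt G.f [j, i, i, i, j] x = some z

def IsGCM {I : Type*} (A : I → I → ℤ) : Prop :=
  (∀ i, A i i = 2) ∧ (∀ i j, i ≠ j → A i j ≤ 0) ∧ (∀ i j, A i j = 0 ↔ A j i = 0)

def IsSymmetrizable {I : Type*} (A : I → I → ℤ) : Prop :=
  ∃ d : I → ℤ, (∀ i, 0 < d i) ∧ ∀ i j, d i * A i j = d j * A j i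

/-- Every 2×2 principal submatrix of `A` is `A₁⊕A₁`, `A₂`, `B₂` or `ᵗB₂`. -/
def Rank2OK {I : Type*} (A : I → I → ℤ) : Prop :=
  ∀ i j, i ≠ j →
    (A i j = 0 ∧ A j i = 0) ∨ (A i j = -1 ∧ A j i = -1) ∨
    (A i j = -2 ∧ A j i = -1) ∨ (A i j = -1 ∧ A j i = -2)

/-- (S6)--(S9) hold for every ordered pair with `A|_{i,j} = B₂`. -/
def ExtraB2 {I X : Type*} (A : I → I → ℤ) (G : GoodGraph I X) : Prop :=
  ∀ i j, A i j = -2 → A j i = -1 →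
    axS6 G i j ∧ axS7 G i j ∧ axS8 G i j ∧ axS9 G i j
section Basics

variable {I X : Type}

theorem iterOpt_succ {g : X → Option X} (n : ℕ) (x : X) :
    iterOpt g (n + 1) x = (g x).bind (iterOpt g n) := rfl

theorem iterOpt_add {g : X → Option X} (m n : ℕ) (x : X) :
    iterOpt g (m + n) x = (iterOpt g m x).bind (iterOpt g n) := by
  induction m generalizing x with
  | zero => simp [iterOpt]
  | succ k ih =>
      have h : k + 1 + n = (k + n) + 1 := by omega
      rw [h, iterOpt_succ, iterOpt_succ]
      cases hg : g x with
      | none => rfl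
      | some y => simp [ih]

theorem iterOpt_none_mono {g : X → Option X} {m : ℕ} {x : X}
    (h : iterOpt g m x = none) (k : ℕ) : iterOpt g (m + k) x = none := by
  rw [iterOpt_add, h]; rfl

namespace GoodGraph

variable (G : GoodGraph I X)

theorem eps_unique {i : I} {x : X} {n : ℕ} (h1 : iterOpt (G.e i) n x ≠ none)
    (h2 : iterOpt (G.e i) (n + 1) x = none) : G.eps i x = n := by
  rcases lt_trichotomy (G.eps i x) n with h | h | h
  · exfalso
    have := iterOpt_none_mono (G.eps_top i x) (n - (G.eps i x + 1))
    rw [show G.eps i x + 1 + (n - (G.eps i x + 1)) = n by omega] at this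
    exact h1 this
  · exact h
  · exfalso
    have := iterOpt_none_mono h2 (G.eps i x - (n + 1))
    rw [show n + 1 + (G.eps i x - (n + 1)) = G.eps i x by omega] at this
    exact G.eps_ne i x this

theorem phi_unique {i : I} {x : X} {n : ℕ} (h1 : iterOpt (G.f i) n x ≠ none)
    (h2 : iterOpt (G.f i) (n + 1) x = none) : G.phi i x = n := by
  rcases lt_trichotomy (G.phi i x) n with h | h | h
  · exfalso
    have := iterOpt_none_mono (G.phi_top i x) (n - (G.phi i x + 1))
    rw [show G.phi i x + 1 + (n - (G.phi i x + 1)) = n by omega] at this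
    exact h1 this
  · exact h
  · exfalso
    have := iterOpt_none_mono h2 (G.phi i x - (n + 1))
    rw [show n + 1 + (G.phi i x - (n + 1)) = G.phi i x by omega] at this
    exact G.phi_ne i x this

theorem eps_succ {i : I} {x y : X} (h : G.e i x = some y) :
    G.eps i x = G.eps i y + 1 := by
  have key : ∀ n, iterOpt (G.e i) (n + 1) x = iterOpt (G.e i) n y := by
    intro n; rw [iterOpt_succ, h]; rfl
  apply G.eps_unique
  · rw [key]; exact G.eps_ne i y
  · rw [show G.eps i y + 1 + 1 = (G.eps i y + 1) + 1 from rfl, key]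
    exact G.eps_top i y

theorem phi_succ {i : I} {x y : X} (h : G.f i x = some y) :
    G.phi i x = G.phi i y + 1 := by
  have key : ∀ n, iterOpt (G.f i) (n + 1) x = iterOpt (G.f i) n y := by
    intro n; rw [iterOpt_succ, h]; rfl
  apply G.phi_unique
  · rw [key]; exact G.phi_ne i y
  · rw [show G.phi i y + 1 + 1 = (G.phi i y + 1) + 1 from rfl, key]
    exact G.phi_top i y

theorem e_none_iff {i : I} {x : X} : G.e i x = none ↔ G.eps i x = 0 := by
  constructor
  · intro h
    apply G.eps_unique (by simp [iterOpt])
    rw [iterOpt_succ, h]; rfl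
  · intro h
    cases he : G.e i x with
    | none => rfl
    | some y =>
        exfalso
        have := G.eps_succ he
        omega

theorem f_none_iff {i : I} {x : X} : G.f i x = none ↔ G.phi i x = 0 := by
  constructor
  · intro h
    apply G.phi_unique (by simp [iterOpt])
    rw [iterOpt_succ, h]; rfl
  · intro h
    cases hf : G.f i x with
    | none => rfl
    | some y =>
        exfalso
        have := G.phi_succ hf
        omega

theorem e_some_of_eps {i : I} {x : X} (h : G.eps i x ≠ 0) : ∃ y, G.e i x = some y := by
  cases he : G.e i x with
  | none => exact absurd (G.e_none_iff.1 he) h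
  | some y => exact ⟨y, rfl⟩

theorem f_some_of_phi {i : I} {x : X} (h : G.phi i x ≠ 0) : ∃ y, G.f i x = some y := by
  cases hf : G.f i x with
  | none => exact absurd (G.f_none_iff.1 hf) h
  | some y => exact ⟨y, rfl⟩

theorem eps_of_e {i : I} {x y : X} (h : G.e i x = some y) :
    G.eps i y + 1 = G.eps i x := (G.eps_succ h).symm

theorem phi_of_e {i : I} {x y : X} (h : G.e i x = some y) :
    G.phi i y = G.phi i x + 1 := G.phi_succ ((G.ef i y x).1 h)

theorem eps_of_f {i : I} {x y : X} (h : G.f i x = some y) :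
    G.eps i y = G.eps i x + 1 := G.eps_succ ((G.ef i x y).2 h)

theorem f_inj {i : I} {x y z : X} (h1 : G.f i x = some z) (h2 : G.f i y = some z) :
    x = y := by
  have e1 := (G.ef i x z).2 h1
  have e2 := (G.ef i y z).2 h2
  rw [e1] at e2; exact (Option.some.inj e2)

theorem e_inj {i : I} {x y z : X} (h1 : G.e i x = some z) (h2 : G.e i y = some z) :
    x = y := by
  have e1 := (G.ef i z x).1 h1
  have e2 := (G.ef i z y).1 h2
  rw [e1] at e2; exact (Option.some.inj e2)

end GoodGraph

theorem chain_nil {g : I → X → Option X} (x : X) : chainOpt g [] x = some x := rfl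

theorem chain_cons {g : I → X → Option X} (a : I) (w : List I) (x : X) :
    chainOpt g (a :: w) x = (chainOpt g w x).bind (g a) := rfl

theorem chain_append {g : I → X → Option X} (w₁ w₂ : List I) (x : X) :
    chainOpt g (w₁ ++ w₂) x = (chainOpt g w₂ x).bind (chainOpt g w₁) := by
  induction w₁ with
  | nil => show chainOpt g w₂ x = _; cases chainOpt g w₂ x <;> rfl
  | cons a t ih =>
      rw [List.cons_append, chain_cons, ih]
      cases chainOpt g w₂ x with
      | none => rfl
      | some m => simp [chain_cons]

theorem chain_single {g : I → X → Option X} (a : I) (x : X) :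
    chainOpt g [a] x = g a x := by
  rw [chain_cons, chain_nil, Option.bind_some]

theorem chain_some_cons {g : I → X → Option X} {a : I} {w : List I} {x z : X}
    (h : chainOpt g (a :: w) x = some z) :
    ∃ m, chainOpt g w x = some m ∧ g a m = some z := by
  rw [chain_cons] at h
  cases hm : chainOpt g w x with
  | none => rw [hm] at h; exact absurd h (by simp)
  | some m => rw [hm] at h; exact ⟨m, rfl, h⟩

namespace GoodGraph

variable (G : GoodGraph I X)

theorem chain_e_to_f {w : List I} {x z : X} (h : chainOpt G.e w x = some z) :
    chainOpt G.f w.reverse z = some x := by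
  induction w generalizing z with
  | nil => rw [chain_nil] at h; rw [Option.some.inj h]; rfl
  | cons a t ih =>
      obtain ⟨m, hm, ha⟩ := chain_some_cons h
      have hf : G.f a z = some m := (G.ef a z m).1 ha
      rw [List.reverse_cons, chain_append, chain_single, hf, Option.bind_some]
      exact ih hm

theorem chain_f_to_e {w : List I} {x z : X} (h : chainOpt G.f w x = some z) :
    chainOpt G.e w.reverse z = some x := by
  induction w generalizing z with
  | nil => rw [chain_nil] at h; rw [Option.some.inj h]; rfl
  | cons a t ih =>
      obtain ⟨m, hm, ha⟩ := chain_some_cons h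
      have hf : G.e a z = some m := (G.ef a m z).2 ha
      rw [List.reverse_cons, chain_append, chain_single, hf, Option.bind_some]
      exact ih hm

end GoodGraph

end Basics
section Reg

variable {I X : Type}

theorem chain_extend {g : I → X → Option X} {w : List I} {x m : X}
    (h : chainOpt g w x = some m) (v : List I) :
    chainOpt g (v ++ w) x = chainOpt g v m := by
  rw [chain_append, h, Option.bind_some]

theorem chain_shift {g : I → X → Option X} {a : I} {x x1 : X}
    (h : g a x = some x1) (w : List I) :
    chainOpt g (w ++ [a]) x = chainOpt g w x1 := by
  rw [chain_append, chain_single, h, Option.bind_some]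

variable {A : I → I → ℤ} {G : GoodGraph I X}

theorem range_e (hS2 : axS2 A G) (hS3 : axS3 G) {i j : I} (hij : i ≠ j) {x y : X}
    (h : G.e i x = some y) :
    ∃ a b : ℕ, G.eps j y = G.eps j x + a ∧ G.phi j x = G.phi j y + b ∧
      (a : ℤ) + b = -(A j i) := by
  have h2 := hS2 i j hij x y h
  have h3 := hS3 i j hij x y h
  exact ⟨G.eps j y - G.eps j x, G.phi j x - G.phi j y, by omega, by omega, by omega⟩

theorem mu_f (hA : IsGCM A) (hS2 : axS2 A G) {j : I} {x y : X}
    (h : G.f j x = some y) (i : I) :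
    (G.phi i y : ℤ) - G.eps i y = ((G.phi i x : ℤ) - G.eps i x) - A i j := by
  by_cases hij : i = j
  · subst hij
    have h1 := G.phi_succ h
    have h2 := G.eps_of_f h
    have h3 := hA.1 i
    omega
  · have he : G.e j y = some x := (G.ef j x y).2 h
    have h2 := hS2 j i (fun hh => hij hh.symm) y x he
    omega

end Reg

section Configs

variable {I X : Type}

def CfgSqA (G : GoodGraph I X) (i j : I) (x1 x2 : X) : Prop :=
  ∃ z, G.e j x1 = some z ∧ G.e i x2 = some z ∧ G.phi i x1 = G.phi i z

def CfgB4 (G : GoodGraph I X) (i j : I) (x1 x2 : X) : Prop :=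
  ∃ z zi zj, chainOpt G.e [i, j, j] x1 = some z ∧ chainOpt G.e [j, i, i] x2 = some z ∧
    G.f i z = some zi ∧ G.f j z = some zj ∧
    G.phi j zi = G.phi j z + 1 ∧ G.phi i zj = G.phi i z + 1

def CfgP (A : I → I → ℤ) (G : GoodGraph I X) (i j : I) (x1 x2 : X) : Prop :=
  A i j = -2 ∧ A j i = -1 ∧
  ∃ y' t fy', chainOpt G.e [i, i, j, j] x1 = some y' ∧ chainOpt G.e [i, i, i] x2 = some t ∧
    G.e j t = some y' ∧ G.f i y' = some fy' ∧ G.phi j fy' = G.phi j y' + 1 ∧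
    G.phi i t = G.phi i y' + 1 ∧ 2 ≤ G.phi i y'

def CfgR (A : I → I → ℤ) (G : GoodGraph I X) (i j : I) (x1 x2 : X) : Prop :=
  A i j = -2 ∧ A j i = -1 ∧
  ∃ y' t fy', chainOpt G.e [i, i, j, j] x1 = some y' ∧ chainOpt G.e [i, i, i] x2 = some t ∧
    G.e j t = some y' ∧ G.f i y' = some fy' ∧ G.phi j fy' = G.phi j y' ∧
    G.phi i t = G.phi i y' + 2 ∧
    ∃ u v, chainOpt G.f [i, i] y' = some u ∧ G.f j u = some v ∧ G.phi i v = G.phi i u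

def CfgQ (A : I → I → ℤ) (G : GoodGraph I X) (i j : I) (x1 x2 : X) : Prop :=
  A i j = -2 ∧ A j i = -1 ∧
  ∃ z zi zj, chainOpt G.e [j, i, i, i, j, j] x1 = some z ∧
    chainOpt G.e [i, j, j, i, i, i] x2 = some z ∧
    G.f i z = some zi ∧ G.f j z = some zj ∧
    G.phi j zi = G.phi j z + 1 ∧ G.phi i zj = G.phi i z + 2 ∧
    (∃ y7 ey, chainOpt G.e [i, j, j] x1 = some y7 ∧ G.e i y7 = some ey ∧
      G.eps j ey = G.eps j y7) ∧
    (∃ y7' ey', G.e i x2 = some y7' ∧ G.e i y7' = some ey' ∧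
      G.eps j ey' = G.eps j y7' + 1)

def BigDisj (A : I → I → ℤ) (G : GoodGraph I X) (i j : I) (x1 x2 : X) : Prop :=
  CfgSqA G i j x1 x2 ∨ CfgSqA G j i x2 x1 ∨ CfgB4 G i j x1 x2 ∨ CfgB4 G j i x2 x1 ∨
  CfgP A G i j x1 x2 ∨ CfgP A G j i x2 x1 ∨ CfgQ A G i j x1 x2 ∨ CfgQ A G j i x2 x1 ∨
  CfgR A G i j x1 x2 ∨ CfgR A G j i x2 x1

theorem keyUpOrth {A : I → I → ℤ} {G : GoodGraph I X}
    (hreg : ARegular A G) {i j : I} (hij : i ≠ j) (hji : A j i = 0)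
    {x x1 x2 : X} (h1 : G.e i x = some x1) (h2 : G.e j x = some x2) :
    CfgSqA G i j x1 x2 := by
  obtain ⟨hS2, hS3, hS4, hS5⟩ := hreg
  obtain ⟨a1, b1, ha1, hb1, hab1⟩ := range_e hS2 hS3 hij h1
  rw [hji] at hab1
  have ha0 : a1 = 0 := by omega
  exact (hS4 i j hij x x1 x2 h1 h2).1 (by omega)

theorem keyUpA2 {A : I → I → ℤ} {G : GoodGraph I X}
    (hreg : ARegular A G) {i j : I} (hij : i ≠ j) (hij2 : A i j = -1) (hji : A j i = -1)
    {x x1 x2 : X} (h1 : G.e i x = some x1) (h2 : G.e j x = some x2) :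
    CfgSqA G i j x1 x2 ∨ CfgSqA G j i x2 x1 ∨ CfgB4 G i j x1 x2 := by
  obtain ⟨hS2, hS3, hS4, hS5⟩ := hreg
  obtain ⟨a1, b1, ha1, hb1, hab1⟩ := range_e hS2 hS3 hij h1
  obtain ⟨a2, b2, ha2, hb2, hab2⟩ := range_e hS2 hS3 (Ne.symm hij) h2
  rw [hji] at hab1
  rw [hij2] at hab2
  by_cases hc1 : a1 = 0
  · exact Or.inl ((hS4 i j hij x x1 x2 h1 h2).1 (by omega))
  by_cases hc2 : a2 = 0
  · exact Or.inr (Or.inl ((hS4 j i (Ne.symm hij) x x2 x1 h2 h1).1 (by omega)))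
  have ha1' : a1 = 1 := by omega
  have ha2' : a2 = 1 := by omega
  obtain ⟨z, zi, zj, hz1, hz2, hfi, hfj, hp1, hp2⟩ :=
    (hS4 i j hij x x1 x2 h1 h2).2 (by omega) (by omega)
  refine Or.inr (Or.inr ⟨z, zi, zj, ?_, ?_, hfi, hfj, hp1, hp2⟩)
  · rw [show ([i, j, j, i] : List I) = [i, j, j] ++ [i] from rfl, chain_shift h1] at hz1
    exact hz1
  · rw [show ([j, i, i, j] : List I) = [j, i, i] ++ [j] from rfl, chain_shift h2] at hz2
    exact hz2

end Configs
section KeyB2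

variable {I X : Type} {A : I → I → ℤ} {G : GoodGraph I X}

theorem keyUpB2 (hreg : ARegular A G) (hex : ExtraB2 A G) {i j : I}
    (hij : i ≠ j) (hij2 : A i j = -2) (hji : A j i = -1)
    {x x1 x2 : X} (h1 : G.e i x = some x1) (h2 : G.e j x = some x2) :
    CfgSqA G i j x1 x2 ∨ CfgSqA G j i x2 x1 ∨ CfgB4 G i j x1 x2 ∨
    CfgP A G i j x1 x2 ∨ CfgQ A G i j x1 x2 ∨ CfgR A G i j x1 x2 := by
  obtain ⟨hS2, hS3, hS4, hS5⟩ := hreg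
  obtain ⟨a1, b1, ha1, hb1, hab1⟩ := range_e hS2 hS3 hij h1
  obtain ⟨a2, b2, ha2, hb2, hab2⟩ := range_e hS2 hS3 (Ne.symm hij) h2
  rw [hji] at hab1
  rw [hij2] at hab2
  by_cases hc1 : a1 = 0
  · exact Or.inl ((hS4 i j hij x x1 x2 h1 h2).1 (by omega))
  by_cases hc2 : a2 = 0
  · exact Or.inr (Or.inl ((hS4 j i (Ne.symm hij) x x2 x1 h2 h1).1 (by omega)))
  have ha1' : a1 = 1 := by omega
  by_cases hc3 : a2 = 1
  · -- the (1,1) case : B4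
    obtain ⟨z, zi, zj, hz1, hz2, hfi, hfj, hp1, hp2⟩ :=
      (hS4 i j hij x x1 x2 h1 h2).2 (by omega) (by omega)
    refine Or.inr (Or.inr (Or.inl ⟨z, zi, zj, ?_, ?_, hfi, hfj, hp1, hp2⟩))
    · rw [show ([i, j, j, i] : List I) = [i, j, j] ++ [i] from rfl, chain_shift h1] at hz1
      exact hz1
    · rw [show ([j, i, i, j] : List I) = [j, i, i] ++ [j] from rfl, chain_shift h2] at hz2
      exact hz2
  · -- the (1,2) case : use S6
    have ha2' : a2 = 2 := by omega
    obtain ⟨y, y', hy, hy', hbody⟩ :=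
      (hex i j hij2 hji).1 x x1 x2 h1 h2 (by omega) (by omega)
    -- extract f i y, f i y'
    obtain ⟨fy, hfy0, hfy⟩ := chain_some_cons hy
    obtain ⟨fy', hfy0', hfy'⟩ := chain_some_cons hy'
    have hfyf : G.f i y = some fy := (G.ef i y fy).1 hfy
    have hfyf' : G.f i y' = some fy' := (G.ef i y' fy').1 hfy'
    have hb := hbody fy fy' hfyf hfyf'
    -- the phi differences
    obtain ⟨c1, d1, hcd1, hdd1, hs1⟩ := range_e hS2 hS3 hij hfy
    obtain ⟨c2, d2, hcd2, hdd2, hs2⟩ := range_e hS2 hS3 hij hfy'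
    rw [hji] at hs1 hs2
    -- useful chain identities
    have hyx2 : chainOpt G.e [i, i] x2 = some y := by
      rw [show ([i, i, j] : List I) = [i, i] ++ [j] from rfl, chain_shift h2] at hy
      exact hy
    have hy'x1 : chainOpt G.e [i, i, j, j] x1 = some y' := by
      rw [show ([i, i, j, j, i] : List I) = [i, i, j, j] ++ [i] from rfl,
        chain_shift h1] at hy'
      exact hy'
    have hfy0x1 : chainOpt G.e [i, j, j] x1 = some fy' := by
      rw [show ([i, j, j, i] : List I) = [i, j, j] ++ [i] from rfl, chain_shift h1] at hfy0'
      exact hfy0'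
    have hfy0x2 : G.e i x2 = some fy := by
      rw [show ([i, j] : List I) = [i] ++ [j] from rfl, chain_shift h2, chain_single] at hfy0
      exact hfy0
    by_cases hd1' : d1 = 0
    · -- phi j fy = phi j y
      by_cases hd2' : d2 = 0
      · -- case (0,0) : R
        obtain ⟨t, ht1, ht2, ht3, u, v, hu, hv, huv⟩ := hb.2.2.2 (by omega) (by omega)
        refine Or.inr (Or.inr (Or.inr (Or.inr (Or.inr
          ⟨hij2, hji, y', t, fy', hy'x1, ?_, (G.ef j y' t).2 ht2, hfyf', by omega, ht3,
            u, v, hu, hv, huv⟩))))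
        rw [show ([i, i, i] : List I) = [i] ++ [i, i] from rfl, chain_extend hyx2,
          chain_single]
        exact ht1
      · -- case (0,1) : Q
        have hd2'' : d2 = 1 := by omega
        obtain ⟨z, zi, zj, hz1, hz2, hfi, hfj, hp1, hp2⟩ := hb.2.2.1 (by omega) (by omega)
        refine Or.inr (Or.inr (Or.inr (Or.inr (Or.inl
          ⟨hij2, hji, z, zi, zj, ?_, ?_, hfi, hfj, hp1, hp2,
            ⟨fy', y', hfy0x1, hfy', by omega⟩, ⟨fy, y, hfy0x2, hfy, by omega⟩⟩))))
        · rw [show ([j, i, i, i, j, j, i] : List I) = [j, i, i, i, j, j] ++ [i] from rfl,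
            chain_shift h1] at hz1
          exact hz1
        · rw [show ([i, j, j, i, i, i, j] : List I) = [i, j, j, i, i, i] ++ [j] from rfl,
            chain_shift h2] at hz2
          exact hz2
    · have hd1'' : d1 = 1 := by omega
      by_cases hd2' : d2 = 0
      · -- case (1,0) : excluded
        exact absurd ⟨by omega, by omega⟩ hb.1
      · -- case (1,1) : P
        have hd2'' : d2 = 1 := by omega
        obtain ⟨t, ht1, ht2, ht3⟩ := hb.2.1 (by omega) (by omega)
        have h2le : 2 ≤ G.phi i y' := by
          obtain ⟨m1, hm1, he1⟩ := chain_some_cons hy'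
          obtain ⟨m2, hm2, he2⟩ := chain_some_cons hm1
          have := G.phi_of_e he1
          have := G.phi_of_e he2
          omega
        refine Or.inr (Or.inr (Or.inr (Or.inl
          ⟨hij2, hji, y', t, fy', hy'x1, ?_, (G.ef j y' t).2 ht2, hfyf', by omega, ht3,
            h2le⟩)))
        rw [show ([i, i, i] : List I) = [i] ++ [i, i] from rfl, chain_extend hyx2,
          chain_single]
        exact ht1

theorem keyUp (hA : IsGCM A) (hrk : Rank2OK A) (hreg : ARegular A G) (hex : ExtraB2 A G)
    {i j : I} (hij : i ≠ j) {x x1 x2 : X}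
    (h1 : G.e i x = some x1) (h2 : G.e j x = some x2) :
    BigDisj A G i j x1 x2 := by
  unfold BigDisj
  rcases hrk i j hij with ⟨u1, u2⟩ | ⟨u1, u2⟩ | ⟨u1, u2⟩ | ⟨u1, u2⟩
  · exact Or.inl (keyUpOrth hreg hij u2 h1 h2)
  · rcases keyUpA2 hreg hij u1 u2 h1 h2 with h | h | h
    · exact Or.inl h
    · exact Or.inr (Or.inl h)
    · exact Or.inr (Or.inr (Or.inl h))
  · rcases keyUpB2 hreg hex hij u1 u2 h1 h2 with h | h | h | h | h | h
    · exact Or.inl h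
    · exact Or.inr (Or.inl h)
    · exact Or.inr (Or.inr (Or.inl h))
    · exact Or.inr (Or.inr (Or.inr (Or.inr (Or.inl h))))
    · exact Or.inr (Or.inr (Or.inr (Or.inr (Or.inr (Or.inr (Or.inl h))))))
    · exact Or.inr (Or.inr (Or.inr (Or.inr (Or.inr (Or.inr (Or.inr (Or.inr (Or.inl h))))))))
  · rcases keyUpB2 hreg hex (Ne.symm hij) u2 u1 h2 h1 with h | h | h | h | h | h
    · exact Or.inr (Or.inl h)
    · exact Or.inl h
    · exact Or.inr (Or.inr (Or.inr (Or.inl h)))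
    · exact Or.inr (Or.inr (Or.inr (Or.inr (Or.inr (Or.inl h)))))
    · exact Or.inr (Or.inr (Or.inr (Or.inr (Or.inr (Or.inr (Or.inr (Or.inl h)))))))
    · exact Or.inr (Or.inr (Or.inr (Or.inr (Or.inr (Or.inr (Or.inr (Or.inr (Or.inr h))))))))

end KeyB2
section Bwd

variable {I X : Type} {A : I → I → ℤ} {G : GoodGraph I X}

theorem bwdSqA (hreg : ARegular A G) {i j : I} (hij : i ≠ j) {x1 x2 : X}
    (h : CfgSqA G i j x1 x2) : ∃ u, G.f i x1 = some u ∧ G.f j x2 = some u := by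
  obtain ⟨hS2, hS3, hS4, hS5⟩ := hreg
  obtain ⟨z, hz1, hz2, hz3⟩ := h
  obtain ⟨u, hu1, hu2, -⟩ :=
    (hS5 j i (Ne.symm hij) z x1 x2 ((G.ef j z x1).1 hz1) ((G.ef i z x2).1 hz2)).1 hz3
  exact ⟨u, hu1, hu2⟩

theorem bwdB4 (hreg : ARegular A G) {i j : I} (hij : i ≠ j) {x1 x2 : X}
    (h : CfgB4 G i j x1 x2) : ∃ u, G.f i x1 = some u ∧ G.f j x2 = some u := by
  obtain ⟨hS2, hS3, hS4, hS5⟩ := hreg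
  obtain ⟨z, zi, zj, hc1, hc2, hfi, hfj, hp1, hp2⟩ := h
  obtain ⟨Z, Zi, Zj, hd1, hd2, -, -, -, -⟩ := (hS5 i j hij z zi zj hfi hfj).2 hp1 hp2
  have hr1 : chainOpt G.f [j, j, i] z = some x1 := by simpa using G.chain_e_to_f hc1
  have hr2 : chainOpt G.f [i, i, j] z = some x2 := by simpa using G.chain_e_to_f hc2
  refine ⟨Z, ?_, ?_⟩
  · rw [show ([i, j, j, i] : List I) = [i] ++ [j, j, i] from rfl, chain_extend hr1,
      chain_single] at hd1
    exact hd1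
  · rw [show ([j, i, i, j] : List I) = [j] ++ [i, i, j] from rfl, chain_extend hr2,
      chain_single] at hd2
    exact hd2

theorem bwdP (hex : ExtraB2 A G) {i j : I} {x1 x2 : X}
    (h : CfgP A G i j x1 x2) : ∃ u, G.f i x1 = some u ∧ G.f j x2 = some u := by
  obtain ⟨hij2, hji, y', t, fy', hc1, hc2, hjt, hfi, hp1, hpt, h2le⟩ := h
  have hfjy' : G.f j y' = some t := (G.ef j y' t).1 hjt
  obtain ⟨Z, hZ1, hZ2⟩ := (hex i j hij2 hji).2.2.1 y' fy' t hfi hfjy' hp1 hpt h2le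
  have hr1 : chainOpt G.f [j, j, i, i] y' = some x1 := by simpa using G.chain_e_to_f hc1
  have hc2' : chainOpt G.e [j, i, i, i] x2 = some y' := by
    rw [show ([j, i, i, i] : List I) = [j] ++ [i, i, i] from rfl, chain_extend hc2,
      chain_single]
    exact hjt
  have hr2 : chainOpt G.f [i, i, i, j] y' = some x2 := by simpa using G.chain_e_to_f hc2'
  refine ⟨Z, ?_, ?_⟩
  · rw [show ([i, j, j, i, i] : List I) = [i] ++ [j, j, i, i] from rfl, chain_extend hr1,
      chain_single] at hZ1
    exact hZ1
  · rw [show ([j, i, i, i, j] : List I) = [j] ++ [i, i, i, j] from rfl, chain_extend hr2,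
      chain_single] at hZ2
    exact hZ2

theorem bwdR (hex : ExtraB2 A G) {i j : I} {x1 x2 : X}
    (h : CfgR A G i j x1 x2) : ∃ u, G.f i x1 = some u ∧ G.f j x2 = some u := by
  obtain ⟨hij2, hji, y', t, fy', hc1, hc2, hjt, hfi, hp1, hpt, u, v, hu, hv, huv⟩ := h
  have hfjy' : G.f j y' = some t := (G.ef j y' t).1 hjt
  obtain ⟨Z, hZ1, hZ2⟩ := (hex i j hij2 hji).2.2.2 y' fy' t hfi hfjy' hp1 hpt u v hu hv huv
  have hr1 : chainOpt G.f [j, j, i, i] y' = some x1 := by simpa using G.chain_e_to_f hc1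
  have hc2' : chainOpt G.e [j, i, i, i] x2 = some y' := by
    rw [show ([j, i, i, i] : List I) = [j] ++ [i, i, i] from rfl, chain_extend hc2,
      chain_single]
    exact hjt
  have hr2 : chainOpt G.f [i, i, i, j] y' = some x2 := by simpa using G.chain_e_to_f hc2'
  refine ⟨Z, ?_, ?_⟩
  · rw [show ([i, j, j, i, i] : List I) = [i] ++ [j, j, i, i] from rfl, chain_extend hr1,
      chain_single] at hZ1
    exact hZ1
  · rw [show ([j, i, i, i, j] : List I) = [j] ++ [i, i, i, j] from rfl, chain_extend hr2,
      chain_single] at hZ2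
    exact hZ2

theorem bwdQ (hex : ExtraB2 A G) {i j : I} {x1 x2 : X}
    (h : CfgQ A G i j x1 x2) : ∃ u, G.f i x1 = some u ∧ G.f j x2 = some u := by
  obtain ⟨hij2, hji, z, zi, zj, hc1, hc2, hfi, hfj, hp1, hp2,
    ⟨y7, ey, hy7, hey, heps1⟩, ⟨y7', ey', hy7', hey', heps2⟩⟩ := h
  obtain ⟨y, Y', hy, hY', hbody⟩ := (hex i j hij2 hji).2.1 z zi zj hfi hfj hp1 hp2
  have hz7 : chainOpt G.e [j, i, i] y7 = some z := by
    rw [show ([j, i, i, i, j, j] : List I) = [j, i, i] ++ [i, j, j] from rfl,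
      chain_extend hy7] at hc1
    exact hc1
  have hyy : chainOpt G.f [i, i, j] z = some y7 := by simpa using G.chain_e_to_f hz7
  have hy_eq : y = y7 := by rw [hy] at hyy; exact Option.some.inj hyy
  have hz7' : chainOpt G.e [i, j, j, i, i] y7' = some z := by
    rw [show ([i, j, j, i, i, i] : List I) = [i, j, j, i, i] ++ [i] from rfl,
      chain_shift hy7'] at hc2
    exact hc2
  have hYY : chainOpt G.f [i, i, j, j, i] z = some y7' := by simpa using G.chain_e_to_f hz7'
  have hY_eq : Y' = y7' := by rw [hY'] at hYY; exact Option.some.inj hYY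
  subst hy_eq
  subst hY_eq
  obtain ⟨Z, hZ1, hZ2⟩ := hbody ey ey' hey hey' heps1 heps2
  have hr1 : chainOpt G.f [j, j, i, i, i, j] z = some x1 := by
    simpa using G.chain_e_to_f hc1
  have hr2 : chainOpt G.f [i, i, i, j, j, i] z = some x2 := by
    simpa using G.chain_e_to_f hc2
  refine ⟨Z, ?_, ?_⟩
  · rw [show ([i, j, j, i, i, i, j] : List I) = [i] ++ [j, j, i, i, i, j] from rfl,
      chain_extend hr1, chain_single] at hZ2
    exact hZ2
  · rw [show ([j, i, i, i, j, j, i] : List I) = [j] ++ [i, i, i, j, j, i] from rfl,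
      chain_extend hr2, chain_single] at hZ1
    exact hZ1

theorem bigBwd (hreg : ARegular A G) (hex : ExtraB2 A G) {i j : I} (hij : i ≠ j)
    {x1 x2 : X} (h : BigDisj A G i j x1 x2) :
    ∃ u, G.f i x1 = some u ∧ G.f j x2 = some u := by
  rcases h with h | h | h | h | h | h | h | h | h | h
  · exact bwdSqA hreg hij h
  · obtain ⟨u, h1, h2⟩ := bwdSqA hreg (Ne.symm hij) h; exact ⟨u, h2, h1⟩
  · exact bwdB4 hreg hij h
  · obtain ⟨u, h1, h2⟩ := bwdB4 hreg (Ne.symm hij) h; exact ⟨u, h2, h1⟩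
  · exact bwdP hex h
  · obtain ⟨u, h1, h2⟩ := bwdP hex h; exact ⟨u, h2, h1⟩
  · exact bwdQ hex h
  · obtain ⟨u, h1, h2⟩ := bwdQ hex h; exact ⟨u, h2, h1⟩
  · exact bwdR hex h
  · obtain ⟨u, h1, h2⟩ := bwdR hex h; exact ⟨u, h2, h1⟩

end Bwd
section Level

variable {I X : Type} {A : I → I → ℤ} {G : GoodGraph I X}

theorem confl (hA : IsGCM A) (hrk : Rank2OK A) (hreg : ARegular A G) (hex : ExtraB2 A G) :
    ∀ (x : X) (i j : I), i ≠ j → G.e i x ≠ none → G.e j x ≠ none →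
      ∃ (w w' : List I) (z : X), chainOpt G.e w x = some z ∧ chainOpt G.e w' x = some z ∧
        w.length = w'.length ∧ 1 ≤ w.length ∧
        w.getLast? = some i ∧ w'.getLast? = some j := by
  intro x i j hij hi hj
  obtain ⟨x1, h1⟩ := Option.ne_none_iff_exists'.1 hi
  obtain ⟨x2, h2⟩ := Option.ne_none_iff_exists'.1 hj
  have step1 : ∀ (w : List I) (z : X), chainOpt G.e w x1 = some z →
      chainOpt G.e (w ++ [i]) x = some z := by
    intro w z h; rw [chain_shift h1]; exact h
  have step2 : ∀ (w : List I) (z : X), chainOpt G.e w x2 = some z →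
      chainOpt G.e (w ++ [j]) x = some z := by
    intro w z h; rw [chain_shift h2]; exact h
  rcases keyUp hA hrk hreg hex hij h1 h2 with h | h | h | h | h | h | h | h | h | h
  · obtain ⟨z, hz1, hz2, -⟩ := h
    exact ⟨[j, i], [i, j], z, step1 [j] z (by rw [chain_single]; exact hz1),
      step2 [i] z (by rw [chain_single]; exact hz2), rfl, by simp, rfl, rfl⟩
  · obtain ⟨z, hz1, hz2, -⟩ := h
    exact ⟨[j, i], [i, j], z, step1 [j] z (by rw [chain_single]; exact hz2),
      step2 [i] z (by rw [chain_single]; exact hz1), rfl, by simp, rfl, rfl⟩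
  · obtain ⟨z, zi, zj, hc1, hc2, -, -, -, -⟩ := h
    exact ⟨[i, j, j, i], [j, i, i, j], z, step1 [i, j, j] z hc1, step2 [j, i, i] z hc2,
      rfl, by simp, rfl, rfl⟩
  · obtain ⟨z, zi, zj, hc1, hc2, -, -, -, -⟩ := h
    exact ⟨[i, j, j, i], [j, i, i, j], z, step1 [i, j, j] z hc2, step2 [j, i, i] z hc1,
      rfl, by simp, rfl, rfl⟩
  · obtain ⟨-, -, y', t, fy', hc1, hc2, hjt, -⟩ := h
    refine ⟨[i, i, j, j, i], [j, i, i, i, j], y', step1 [i, i, j, j] y' hc1,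
      step2 [j, i, i, i] y' ?_, rfl, by simp, rfl, rfl⟩
    rw [show ([j, i, i, i] : List I) = [j] ++ [i, i, i] from rfl, chain_extend hc2,
      chain_single]
    exact hjt
  · obtain ⟨-, -, y', t, fy', hc1, hc2, hit, -⟩ := h
    refine ⟨[i, j, j, j, i], [j, j, i, i, j], y', step1 [i, j, j, j] y' ?_,
      step2 [j, j, i, i] y' hc1, rfl, by simp, rfl, rfl⟩
    rw [show ([i, j, j, j] : List I) = [i] ++ [j, j, j] from rfl, chain_extend hc2,
      chain_single]
    exact hit
  · obtain ⟨-, -, z, zi, zj, hc1, hc2, -⟩ := h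
    exact ⟨[j, i, i, i, j, j, i], [i, j, j, i, i, i, j], z,
      step1 [j, i, i, i, j, j] z hc1, step2 [i, j, j, i, i, i] z hc2,
      rfl, by simp, rfl, rfl⟩
  · obtain ⟨-, -, z, zi, zj, hc1, hc2, -⟩ := h
    exact ⟨[j, i, i, j, j, j, i], [i, j, j, j, i, i, j], z,
      step1 [j, i, i, j, j, j] z hc2, step2 [i, j, j, j, i, i] z hc1,
      rfl, by simp, rfl, rfl⟩
  · obtain ⟨-, -, y', t, fy', hc1, hc2, hjt, -⟩ := h
    refine ⟨[i, i, j, j, i], [j, i, i, i, j], y', step1 [i, i, j, j] y' hc1,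
      step2 [j, i, i, i] y' ?_, rfl, by simp, rfl, rfl⟩
    rw [show ([j, i, i, i] : List I) = [j] ++ [i, i, i] from rfl, chain_extend hc2,
      chain_single]
    exact hjt
  · obtain ⟨-, -, y', t, fy', hc1, hc2, hit, -⟩ := h
    refine ⟨[i, j, j, j, i], [j, j, i, i, j], y', step1 [i, j, j, j] y' ?_,
      step2 [j, j, i, i] y' hc1, rfl, by simp, rfl, rfl⟩
    rw [show ([i, j, j, j] : List I) = [i] ++ [j, j, j] from rfl, chain_extend hc2,
      chain_single]
    exact hit

theorem newman {x0 : X} (hdead : ∀ i, G.e i x0 = none)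
    (hcf : ∀ (x : X) (i j : I), i ≠ j → G.e i x ≠ none → G.e j x ≠ none →
      ∃ (w w' : List I) (z : X), chainOpt G.e w x = some z ∧ chainOpt G.e w' x = some z ∧
        w.length = w'.length ∧ 1 ≤ w.length ∧
        w.getLast? = some i ∧ w'.getLast? = some j) :
    ∀ (n : ℕ) (x : X) (s t : List I), chainOpt G.e s x = some x0 → s.length = n →
      ∀ z, chainOpt G.e t x = some z →
      t.length ≤ n ∧ ∃ t', chainOpt G.e t' z = some x0 ∧ t'.length + t.length = n := by
  intro n
  induction n using Nat.strong_induction_on with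
  | _ n IH =>
    intro x s t hs hslen z ht
    rcases List.eq_nil_or_concat t with rfl | ⟨t₁, a, rfl⟩
    · rw [chain_nil] at ht
      exact ⟨by simp, s, by rw [Option.some.inj ht] at hs; exact hs, by simpa using hslen⟩
    · simp only [List.concat_eq_append] at ht ⊢
      cases hea : G.e a x with
      | none =>
          rw [chain_append, chain_single, hea] at ht
          simp at ht
      | some xa =>
          have ht' : chainOpt G.e t₁ xa = some z := by
            rw [chain_shift hea] at ht; exact ht
          cases n with
          | zero =>
              exfalso
              have : s = [] := List.length_eq_zero_iff.1 hslen
              subst this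
              rw [chain_nil] at hs
              rw [Option.some.inj hs] at hea
              rw [hdead a] at hea
              cases hea
          | succ n' =>
              rcases List.eq_nil_or_concat s with rfl | ⟨s₁, b, rfl⟩
              · simp at hslen
              · simp only [List.concat_eq_append] at hs hslen
                cases heb : G.e b x with
                | none =>
                    rw [chain_append, chain_single, heb] at hs
                    simp at hs
                | some xb =>
                    have hs' : chainOpt G.e s₁ xb = some x0 := by
                      rw [chain_shift heb] at hs; exact hs
                    have hs'len : s₁.length = n' := by
                      simp at hslen; omega
                    by_cases hab : a = b
                    · subst hab
                      rw [hea] at heb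
                      rw [Option.some.inj heb] at ht'
                      obtain ⟨hle, t', ht'0, hlen'⟩ :=
                        IH n' (by omega) xb s₁ t₁ hs' hs'len z ht'
                      exact ⟨by simp; omega, t', ht'0, by simp; omega⟩
                    · obtain ⟨w, w', zc, hw, hw', hwlen, hwpos, hwl, hwl'⟩ :=
                        hcf x b a (fun hh => hab hh.symm)
                          (by rw [heb]; exact Option.some_ne_none _)
                          (by rw [hea]; exact Option.some_ne_none _)
                      rcases List.eq_nil_or_concat w with rfl | ⟨w₁, c, rfl⟩
                      · simp at hwl
                      rcases List.eq_nil_or_concat w' with rfl | ⟨w'₁, c', rfl⟩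
                      · simp at hwl'
                      simp only [List.concat_eq_append] at hw hw' hwlen hwl hwl'
                      rw [List.getLast?_concat] at hwl hwl'
                      rw [Option.some.inj hwl] at hw
                      rw [Option.some.inj hwl'] at hw'
                      have hw1 : chainOpt G.e w₁ xb = some zc := by
                        rw [chain_shift heb] at hw; exact hw
                      have hw'1 : chainOpt G.e w'₁ xa = some zc := by
                        rw [chain_shift hea] at hw'; exact hw'
                      obtain ⟨hw1le, r, hr, hrlen⟩ :=
                        IH n' (by omega) xb s₁ w₁ hs' hs'len zc hw1
                      have hxa : chainOpt G.e (r ++ w'₁) xa = some x0 := by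
                        rw [chain_extend hw'1]; exact hr
                      have hxalen : (r ++ w'₁).length = n' := by
                        simp at hwlen ⊢; omega
                      obtain ⟨hle, t', ht'0, hlen'⟩ :=
                        IH n' (by omega) xa (r ++ w'₁) t₁ hxa hxalen z ht'
                      exact ⟨by simp; omega, t', ht'0, by simp; omega⟩

theorem pathlen_unique {x0 : X} (hdead : ∀ i, G.e i x0 = none)
    (hcf : ∀ (x : X) (i j : I), i ≠ j → G.e i x ≠ none → G.e j x ≠ none →
      ∃ (w w' : List I) (z : X), chainOpt G.e w x = some z ∧ chainOpt G.e w' x = some z ∧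
        w.length = w'.length ∧ 1 ≤ w.length ∧
        w.getLast? = some i ∧ w'.getLast? = some j)
    {x : X} {s t : List I} (hs : chainOpt G.e s x = some x0)
    (ht : chainOpt G.e t x = some x0) : s.length = t.length := by
  obtain ⟨hle, t', ht', hlen⟩ := newman hdead hcf s.length x s t hs rfl x0 ht
  rcases List.eq_nil_or_concat t' with rfl | ⟨t₁, c, rfl⟩
  · simp at hlen; omega
  · exfalso
    simp only [List.concat_eq_append] at ht'
    cases hec : G.e c x0 with
    | none => rw [chain_append, chain_single, hec] at ht'; simp at ht'
    | some m =>
        rw [hdead c] at hec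
        cases hec

end Level
section MainSetup

variable {I X Y : Type}

structure Ctx (A : I → I → ℤ) {X : Type} (G : GoodGraph I X) (x0 : X) : Prop where
  hA : IsGCM A
  hrk : Rank2OK A
  hreg : ARegular A G
  hex : ExtraB2 A G
  hm : IsMaxElem G x0

noncomputable def lvl (G : GoodGraph I X) (x0 : X) (hm : IsMaxElem G x0) (x : X) : ℕ :=
  (hm.2 x).choose.length

variable {A : I → I → ℤ} {G : GoodGraph I X} {x0 : X}

theorem lvl_unique (ctx : Ctx A G x0) {w : List I} {x : X}
    (hw : chainOpt G.f w x0 = some x) : w.length = lvl G x0 ctx.hm x := by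
  have h1 := G.chain_f_to_e hw
  have h2 := G.chain_f_to_e (ctx.hm.2 x).choose_spec
  have h3 := pathlen_unique ctx.hm.1 (confl ctx.hA ctx.hrk ctx.hreg ctx.hex) h1 h2
  simpa [lvl] using h3

theorem lvl_word (ctx : Ctx A G x0) (x : X) :
    ∃ w, chainOpt G.f w x0 = some x ∧ w.length = lvl G x0 ctx.hm x :=
  ⟨(ctx.hm.2 x).choose, (ctx.hm.2 x).choose_spec, rfl⟩

theorem lvl_f (ctx : Ctx A G x0) {i : I} {x y : X} (h : G.f i x = some y) :
    lvl G x0 ctx.hm y = lvl G x0 ctx.hm x + 1 := by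
  obtain ⟨w, hw, hlen⟩ := lvl_word ctx x
  have hc : chainOpt G.f (i :: w) x0 = some y := by
    rw [chain_cons, hw, Option.bind_some]; exact h
  have h2 := lvl_unique ctx hc
  simp at h2
  omega

theorem lvl_e (ctx : Ctx A G x0) {i : I} {x y : X} (h : G.e i x = some y) :
    lvl G x0 ctx.hm x = lvl G x0 ctx.hm y + 1 :=
  lvl_f ctx ((G.ef i y x).1 h)

theorem lvl_zero (ctx : Ctx A G x0) : lvl G x0 ctx.hm x0 = 0 :=
  (lvl_unique ctx (chain_nil x0)).symm

theorem lvl_eq_zero (ctx : Ctx A G x0) {x : X} (h : lvl G x0 ctx.hm x = 0) : x = x0 := by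
  obtain ⟨w, hw, hlen⟩ := lvl_word ctx x
  rw [h] at hlen
  rw [List.length_eq_zero_iff.1 hlen, chain_nil] at hw
  exact (Option.some.inj hw).symm

theorem lvl_chain_e (ctx : Ctx A G x0) {w : List I} {x z : X}
    (h : chainOpt G.e w x = some z) :
    lvl G x0 ctx.hm z + w.length = lvl G x0 ctx.hm x := by
  induction w generalizing z with
  | nil => rw [chain_nil] at h; rw [Option.some.inj h]; simp
  | cons a t ih =>
      obtain ⟨m, hm', ha⟩ := chain_some_cons h
      have h1 := lvl_e ctx ha
      have h2 := ih hm'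
      simp
      omega

theorem lvl_word_len (ctx : Ctx A G x0) {w : List I} {x : X}
    (hw : chainOpt G.f w x0 = some x) (n : ℕ) (hn : lvl G x0 ctx.hm x = n) :
    w.length = n := by rw [lvl_unique ctx hw, hn]

def CRel (G : GoodGraph I X) (G' : GoodGraph I Y) (x0 : X) (y0 : Y) (x : X) (y : Y) :
    Prop :=
  ∃ w, chainOpt G.f w x0 = some x ∧ chainOpt G'.f w y0 = some y

theorem Rel_symm {G' : GoodGraph I Y} {y0 : Y} {x : X} {y : Y} :
    CRel G' G y0 x0 y x ↔ CRel G G' x0 y0 x y :=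
  exists_congr fun _ => and_comm

def OneSide (G : GoodGraph I X) (G' : GoodGraph I Y) (x0 : X) (y0 : Y)
    (hm : IsMaxElem G x0) (n : ℕ) : Prop :=
  (∀ x, lvl G x0 hm x = n → ∃ y, CRel G G' x0 y0 x y) ∧
  (∀ x y y', lvl G x0 hm x = n → CRel G G' x0 y0 x y → CRel G G' x0 y0 x y' → y = y') ∧
  (∀ x y, lvl G x0 hm x = n → CRel G G' x0 y0 x y →
    ∀ i w, G.e i x = some w → ∃ z, G'.e i y = some z ∧ CRel G G' x0 y0 w z) ∧
  (∀ x y, lvl G x0 hm x = n → CRel G G' x0 y0 x y →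
    ∀ i, G.eps i x = G'.eps i y ∧ G.phi i x = G'.phi i y)

variable {G' : GoodGraph I Y} {y0 : Y}

theorem rel_lvl (ctx : Ctx A G x0) (ctx' : Ctx A G' y0) {x : X} {y : Y}
    (h : CRel G G' x0 y0 x y) : lvl G x0 ctx.hm x = lvl G' y0 ctx'.hm y := by
  obtain ⟨w, h1, h2⟩ := h
  rw [← lvl_unique ctx h1, lvl_unique ctx' h2]

section Transfer

variable (ctx : Ctx A G x0) {n : ℕ}

theorem t_step (IH : ∀ m, m ≤ n → OneSide G G' x0 y0 ctx.hm m) {x : X} {y : Y} (hx : lvl G x0 ctx.hm x ≤ n) (hr : CRel G G' x0 y0 x y)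
    {i : I} {w : X} (h : G.e i x = some w) :
    ∃ z, G'.e i y = some z ∧ CRel G G' x0 y0 w z :=
  (IH _ hx).2.2.1 x y rfl hr i w h

theorem t_fun (IH : ∀ m, m ≤ n → OneSide G G' x0 y0 ctx.hm m) {x : X} {y y' : Y} (hx : lvl G x0 ctx.hm x ≤ n) (h1 : CRel G G' x0 y0 x y)
    (h2 : CRel G G' x0 y0 x y') : y = y' :=
  (IH _ hx).2.1 x y y' rfl h1 h2

theorem t_eps (IH : ∀ m, m ≤ n → OneSide G G' x0 y0 ctx.hm m) {x : X} {y : Y} (hx : lvl G x0 ctx.hm x ≤ n) (hr : CRel G G' x0 y0 x y) (i : I) :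
    G.eps i x = G'.eps i y := ((IH _ hx).2.2.2 x y rfl hr i).1

theorem t_phi (IH : ∀ m, m ≤ n → OneSide G G' x0 y0 ctx.hm m) {x : X} {y : Y} (hx : lvl G x0 ctx.hm x ≤ n) (hr : CRel G G' x0 y0 x y) (i : I) :
    G.phi i x = G'.phi i y := ((IH _ hx).2.2.2 x y rfl hr i).2

theorem t_chain (IH : ∀ m, m ≤ n → OneSide G G' x0 y0 ctx.hm m) {x : X} {y : Y} (hx : lvl G x0 ctx.hm x ≤ n) (hr : CRel G G' x0 y0 x y)
    {w : List I} {z : X} (hc : chainOpt G.e w x = some z) :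
    ∃ Z, chainOpt G'.e w y = some Z ∧ CRel G G' x0 y0 z Z ∧
      lvl G x0 ctx.hm z + w.length = lvl G x0 ctx.hm x := by
  induction w generalizing z with
  | nil =>
      rw [chain_nil] at hc
      obtain rfl := Option.some.inj hc
      exact ⟨y, chain_nil y, hr, by simp⟩
  | cons a t ih =>
      obtain ⟨m, hm', ha⟩ := chain_some_cons hc
      obtain ⟨M, hM, hrM, hlM⟩ := ih hm'
      have hlm : lvl G x0 ctx.hm m ≤ n := by omega
      obtain ⟨Z, hZ, hrZ⟩ := t_step ctx IH hlm hrM ha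
      refine ⟨Z, ?_, hrZ, ?_⟩
      · rw [chain_cons, hM, Option.bind_some]; exact hZ
      · have := lvl_e ctx ha
        simp
        omega

theorem t_f (IH : ∀ m, m ≤ n → OneSide G G' x0 y0 ctx.hm m) {x : X} {y : Y} (hx : lvl G x0 ctx.hm x < n) (hr : CRel G G' x0 y0 x y)
    {a : I} {w : X} (h : G.f a x = some w) :
    ∃ W, G'.f a y = some W ∧ CRel G G' x0 y0 w W := by
  have hlw : lvl G x0 ctx.hm w = lvl G x0 ctx.hm x + 1 := lvl_f ctx h
  obtain ⟨W, hrW⟩ := (IH (lvl G x0 ctx.hm w) (by omega)).1 w rfl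
  have hew : G.e a w = some x := (G.ef a x w).2 h
  obtain ⟨Z, hZ, hrZ⟩ := t_step ctx IH (by omega) hrW hew
  have hZy := t_fun ctx IH (le_of_lt hx) hrZ hr
  rw [hZy] at hZ
  exact ⟨W, (G'.ef a y W).1 hZ, hrW⟩

end Transfer

end MainSetup
section Transfer2

variable {I X Y : Type} {A : I → I → ℤ} {G : GoodGraph I X} {x0 : X}
variable {G' : GoodGraph I Y} {y0 : Y}
variable (ctx : Ctx A G x0) {n : ℕ}

theorem transfer_SqA (IH : ∀ m, m ≤ n → OneSide G G' x0 y0 ctx.hm m)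
    {i j : I} {x1 x2 : X} {y1 y2 : Y}
    (hl1 : lvl G x0 ctx.hm x1 ≤ n) (hl2 : lvl G x0 ctx.hm x2 ≤ n)
    (hr1 : CRel G G' x0 y0 x1 y1) (hr2 : CRel G G' x0 y0 x2 y2)
    (h : CfgSqA G i j x1 x2) : CfgSqA G' i j y1 y2 := by
  obtain ⟨z, hz1, hz2, hz3⟩ := h
  obtain ⟨Z, hZ1, hrZ⟩ := t_step ctx IH hl1 hr1 hz1
  obtain ⟨Z2, hZ2, hrZ2⟩ := t_step ctx IH hl2 hr2 hz2
  have hlz : lvl G x0 ctx.hm z ≤ n := by have := lvl_e ctx hz1; omega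
  have hZZ := t_fun ctx IH hlz hrZ hrZ2
  rw [← hZZ] at hZ2
  refine ⟨Z, hZ1, hZ2, ?_⟩
  rw [← t_phi ctx IH hl1 hr1 i, ← t_phi ctx IH hlz hrZ i]
  exact hz3

theorem transfer_B4 (IH : ∀ m, m ≤ n → OneSide G G' x0 y0 ctx.hm m)
    {i j : I} {x1 x2 : X} {y1 y2 : Y}
    (hl1 : lvl G x0 ctx.hm x1 ≤ n) (hl2 : lvl G x0 ctx.hm x2 ≤ n)
    (hr1 : CRel G G' x0 y0 x1 y1) (hr2 : CRel G G' x0 y0 x2 y2)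
    (h : CfgB4 G i j x1 x2) : CfgB4 G' i j y1 y2 := by
  obtain ⟨z, zi, zj, hc1, hc2, hfi, hfj, hp1, hp2⟩ := h
  obtain ⟨Z, hC1, hrZ, hlev1⟩ := t_chain ctx IH hl1 hr1 hc1
  obtain ⟨Z2, hC2, hrZ2, hlev2⟩ := t_chain ctx IH hl2 hr2 hc2
  simp only [List.length_cons, List.length_nil] at hlev1 hlev2
  have hlz : lvl G x0 ctx.hm z < n := by omega
  have hZZ := t_fun ctx IH (le_of_lt hlz) hrZ hrZ2
  rw [← hZZ] at hC2
  obtain ⟨Zi, hFi, hrZi⟩ := t_f ctx IH hlz hrZ hfi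
  obtain ⟨Zj, hFj, hrZj⟩ := t_f ctx IH hlz hrZ hfj
  have hlzi : lvl G x0 ctx.hm zi ≤ n := by have := lvl_f ctx hfi; omega
  have hlzj : lvl G x0 ctx.hm zj ≤ n := by have := lvl_f ctx hfj; omega
  refine ⟨Z, Zi, Zj, hC1, hC2, hFi, hFj, ?_, ?_⟩
  · rw [← t_phi ctx IH hlzi hrZi j, ← t_phi ctx IH (le_of_lt hlz) hrZ j]
    exact hp1
  · rw [← t_phi ctx IH hlzj hrZj i, ← t_phi ctx IH (le_of_lt hlz) hrZ i]
    exact hp2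

theorem transfer_P (IH : ∀ m, m ≤ n → OneSide G G' x0 y0 ctx.hm m)
    {i j : I} {x1 x2 : X} {y1 y2 : Y}
    (hl1 : lvl G x0 ctx.hm x1 ≤ n) (hl2 : lvl G x0 ctx.hm x2 ≤ n)
    (hr1 : CRel G G' x0 y0 x1 y1) (hr2 : CRel G G' x0 y0 x2 y2)
    (h : CfgP A G i j x1 x2) : CfgP A G' i j y1 y2 := by
  obtain ⟨hij2, hji, y', t, fy', hc1, hc2, hjt, hfi, hp1, hpt, h2le⟩ := h
  obtain ⟨Y', hC1, hrY', hlev1⟩ := t_chain ctx IH hl1 hr1 hc1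
  obtain ⟨T, hC2, hrT, hlev2⟩ := t_chain ctx IH hl2 hr2 hc2
  simp only [List.length_cons, List.length_nil] at hlev1 hlev2
  have hly' : lvl G x0 ctx.hm y' < n := by omega
  have hlt : lvl G x0 ctx.hm t ≤ n := by omega
  obtain ⟨Y'2, hjT, hrY'2⟩ := t_step ctx IH hlt hrT hjt
  have hYY := t_fun ctx IH (le_of_lt hly') hrY'2 hrY'
  rw [hYY] at hjT
  obtain ⟨FY, hFY, hrFY⟩ := t_f ctx IH hly' hrY' hfi
  have hlfy : lvl G x0 ctx.hm fy' ≤ n := by have := lvl_f ctx hfi; omega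
  refine ⟨hij2, hji, Y', T, FY, hC1, hC2, hjT, hFY, ?_, ?_, ?_⟩
  · rw [← t_phi ctx IH hlfy hrFY j, ← t_phi ctx IH (le_of_lt hly') hrY' j]
    exact hp1
  · rw [← t_phi ctx IH hlt hrT i, ← t_phi ctx IH (le_of_lt hly') hrY' i]
    exact hpt
  · rw [← t_phi ctx IH (le_of_lt hly') hrY' i]
    exact h2le

theorem transfer_R (IH : ∀ m, m ≤ n → OneSide G G' x0 y0 ctx.hm m)
    {i j : I} {x1 x2 : X} {y1 y2 : Y}
    (hl1 : lvl G x0 ctx.hm x1 ≤ n) (hl2 : lvl G x0 ctx.hm x2 ≤ n)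
    (hr1 : CRel G G' x0 y0 x1 y1) (hr2 : CRel G G' x0 y0 x2 y2)
    (h : CfgR A G i j x1 x2) : CfgR A G' i j y1 y2 := by
  obtain ⟨hij2, hji, y', t, fy', hc1, hc2, hjt, hfi, hp1, hpt, u, v, hu, hv, huv⟩ := h
  obtain ⟨Y', hC1, hrY', hlev1⟩ := t_chain ctx IH hl1 hr1 hc1
  obtain ⟨T, hC2, hrT, hlev2⟩ := t_chain ctx IH hl2 hr2 hc2
  simp only [List.length_cons, List.length_nil] at hlev1 hlev2
  have hly' : lvl G x0 ctx.hm y' < n := by omega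
  have hlt : lvl G x0 ctx.hm t ≤ n := by omega
  obtain ⟨Y'2, hjT, hrY'2⟩ := t_step ctx IH hlt hrT hjt
  have hYY := t_fun ctx IH (le_of_lt hly') hrY'2 hrY'
  rw [hYY] at hjT
  obtain ⟨FY, hFY, hrFY⟩ := t_f ctx IH hly' hrY' hfi
  have hlfy : lvl G x0 ctx.hm fy' ≤ n := by have := lvl_f ctx hfi; omega
  -- the u, v data
  obtain ⟨m, hm', hmu⟩ := chain_some_cons hu
  rw [chain_single] at hm'
  have hlm : lvl G x0 ctx.hm m < n := by have := lvl_f ctx hm'; omega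
  obtain ⟨M, hM, hrM⟩ := t_f ctx IH hly' hrY' hm'
  obtain ⟨U, hU, hrU⟩ := t_f ctx IH hlm hrM hmu
  have hlu : lvl G x0 ctx.hm u < n := by
    have h1 := lvl_f ctx hmu
    have h2 := lvl_f ctx hm'
    omega
  obtain ⟨V, hV, hrV⟩ := t_f ctx IH hlu hrU hv
  have hlv : lvl G x0 ctx.hm v ≤ n := by have := lvl_f ctx hv; omega
  refine ⟨hij2, hji, Y', T, FY, hC1, hC2, hjT, hFY, ?_, ?_, U, V, ?_, hV, ?_⟩
  · rw [← t_phi ctx IH hlfy hrFY j, ← t_phi ctx IH (le_of_lt hly') hrY' j]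
    exact hp1
  · rw [← t_phi ctx IH hlt hrT i, ← t_phi ctx IH (le_of_lt hly') hrY' i]
    exact hpt
  · rw [chain_cons, chain_single, hM, Option.bind_some]
    exact hU
  · rw [← t_phi ctx IH hlv hrV i, ← t_phi ctx IH (le_of_lt hlu) hrU i]
    exact huv

theorem transfer_Q (IH : ∀ m, m ≤ n → OneSide G G' x0 y0 ctx.hm m)
    {i j : I} {x1 x2 : X} {y1 y2 : Y}
    (hl1 : lvl G x0 ctx.hm x1 ≤ n) (hl2 : lvl G x0 ctx.hm x2 ≤ n)
    (hr1 : CRel G G' x0 y0 x1 y1) (hr2 : CRel G G' x0 y0 x2 y2)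
    (h : CfgQ A G i j x1 x2) : CfgQ A G' i j y1 y2 := by
  obtain ⟨hij2, hji, z, zi, zj, hc1, hc2, hfi, hfj, hp1, hp2,
    ⟨y7, ey, hy7, hey, heps1⟩, ⟨y7', ey', hy7', hey', heps2⟩⟩ := h
  obtain ⟨Z, hC1, hrZ, hlev1⟩ := t_chain ctx IH hl1 hr1 hc1
  obtain ⟨Z2, hC2, hrZ2, hlev2⟩ := t_chain ctx IH hl2 hr2 hc2
  simp only [List.length_cons, List.length_nil] at hlev1 hlev2
  have hlz : lvl G x0 ctx.hm z < n := by omega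
  have hZZ := t_fun ctx IH (le_of_lt hlz) hrZ hrZ2
  rw [← hZZ] at hC2
  obtain ⟨Zi, hFi, hrZi⟩ := t_f ctx IH hlz hrZ hfi
  obtain ⟨Zj, hFj, hrZj⟩ := t_f ctx IH hlz hrZ hfj
  have hlzi : lvl G x0 ctx.hm zi ≤ n := by have := lvl_f ctx hfi; omega
  have hlzj : lvl G x0 ctx.hm zj ≤ n := by have := lvl_f ctx hfj; omega
  obtain ⟨Y7, hY7, hrY7, hlev7⟩ := t_chain ctx IH hl1 hr1 hy7
  simp only [List.length_cons, List.length_nil] at hlev7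
  have hly7 : lvl G x0 ctx.hm y7 ≤ n := by omega
  obtain ⟨EY, hEY, hrEY⟩ := t_step ctx IH hly7 hrY7 hey
  have hley : lvl G x0 ctx.hm ey ≤ n := by have := lvl_e ctx hey; omega
  obtain ⟨Y7', hY7', hrY7'⟩ := t_step ctx IH hl2 hr2 hy7'
  have hly7' : lvl G x0 ctx.hm y7' ≤ n := by have := lvl_e ctx hy7'; omega
  obtain ⟨EY', hEY', hrEY'⟩ := t_step ctx IH hly7' hrY7' hey'
  have hley' : lvl G x0 ctx.hm ey' ≤ n := by have := lvl_e ctx hey'; omega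
  refine ⟨hij2, hji, Z, Zi, Zj, hC1, hC2, hFi, hFj, ?_, ?_,
    ⟨Y7, EY, hY7, hEY, ?_⟩, ⟨Y7', EY', hY7', hEY', ?_⟩⟩
  · rw [← t_phi ctx IH hlzi hrZi j, ← t_phi ctx IH (le_of_lt hlz) hrZ j]
    exact hp1
  · rw [← t_phi ctx IH hlzj hrZj i, ← t_phi ctx IH (le_of_lt hlz) hrZ i]
    exact hp2
  · rw [← t_eps ctx IH hley hrEY j, ← t_eps ctx IH hly7 hrY7 j]
    exact heps1
  · rw [← t_eps ctx IH hley' hrEY' j, ← t_eps ctx IH hly7' hrY7' j]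
    exact heps2

theorem transfer_big (IH : ∀ m, m ≤ n → OneSide G G' x0 y0 ctx.hm m)
    {i j : I} {x1 x2 : X} {y1 y2 : Y}
    (hl1 : lvl G x0 ctx.hm x1 ≤ n) (hl2 : lvl G x0 ctx.hm x2 ≤ n)
    (hr1 : CRel G G' x0 y0 x1 y1) (hr2 : CRel G G' x0 y0 x2 y2)
    (h : BigDisj A G i j x1 x2) : BigDisj A G' i j y1 y2 := by
  rcases h with h | h | h | h | h | h | h | h | h | h
  · exact Or.inl (transfer_SqA ctx IH hl1 hl2 hr1 hr2 h)
  · exact Or.inr (Or.inl (transfer_SqA ctx IH hl2 hl1 hr2 hr1 h))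
  · exact Or.inr (Or.inr (Or.inl (transfer_B4 ctx IH hl1 hl2 hr1 hr2 h)))
  · exact Or.inr (Or.inr (Or.inr (Or.inl (transfer_B4 ctx IH hl2 hl1 hr2 hr1 h))))
  · exact Or.inr (Or.inr (Or.inr (Or.inr (Or.inl
      (transfer_P ctx IH hl1 hl2 hr1 hr2 h)))))
  · exact Or.inr (Or.inr (Or.inr (Or.inr (Or.inr (Or.inl
      (transfer_P ctx IH hl2 hl1 hr2 hr1 h))))))
  · exact Or.inr (Or.inr (Or.inr (Or.inr (Or.inr (Or.inr (Or.inl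
      (transfer_Q ctx IH hl1 hl2 hr1 hr2 h)))))))
  · exact Or.inr (Or.inr (Or.inr (Or.inr (Or.inr (Or.inr (Or.inr (Or.inl
      (transfer_Q ctx IH hl2 hl1 hr2 hr1 h))))))))
  · exact Or.inr (Or.inr (Or.inr (Or.inr (Or.inr (Or.inr (Or.inr (Or.inr (Or.inl
      (transfer_R ctx IH hl1 hl2 hr1 hr2 h)))))))))
  · exact Or.inr (Or.inr (Or.inr (Or.inr (Or.inr (Or.inr (Or.inr (Or.inr (Or.inr
      (transfer_R ctx IH hl2 hl1 hr2 hr1 h)))))))))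

end Transfer2
section MainInd

variable {I X Y : Type} {A : I → I → ℤ} {G : GoodGraph I X} {x0 : X}
variable {G' : GoodGraph I Y} {y0 : Y}

theorem mu_rel (ctx : Ctx A G x0) (ctx' : Ctx A G' y0)
    (hphi0 : ∀ i, G.phi i x0 = G'.phi i y0) {x : X} {y : Y}
    (hr : CRel G G' x0 y0 x y) (i : I) :
    (G.phi i x : ℤ) - G.eps i x = (G'.phi i y : ℤ) - G'.eps i y := by
  obtain ⟨w, h1, h2⟩ := hr
  induction w generalizing x y with
  | nil =>
      rw [chain_nil] at h1 h2
      obtain rfl := Option.some.inj h1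
      obtain rfl := Option.some.inj h2
      have e1 : G.eps i x0 = 0 := G.e_none_iff.1 (ctx.hm.1 i)
      have e2 : G'.eps i y0 = 0 := G'.e_none_iff.1 (ctx'.hm.1 i)
      rw [e1, e2, hphi0 i]
  | cons a t ih =>
      obtain ⟨m, hm1, ha1⟩ := chain_some_cons h1
      obtain ⟨m', hm2, ha2⟩ := chain_some_cons h2
      have hmu1 := mu_f ctx.hA ctx.hreg.1 ha1 i
      have hmu2 := mu_f ctx'.hA ctx'.hreg.1 ha2 i
      have := ih hm1 hm2
      omega

theorem base_side (ctx : Ctx A G x0) (ctx' : Ctx A G' y0)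
    (hphi0 : ∀ i, G.phi i x0 = G'.phi i y0) :
    OneSide G G' x0 y0 ctx.hm 0 := by
  have hy0 : ∀ y : Y, CRel G G' x0 y0 x0 y → y = y0 := by
    rintro y ⟨w, h1, h2⟩
    have hlen := lvl_word_len ctx h1 0 (lvl_zero ctx)
    rw [List.length_eq_zero_iff.1 hlen, chain_nil] at h2
    exact (Option.some.inj h2).symm
  refine ⟨?_, ?_, ?_, ?_⟩
  · intro x hx
    rw [lvl_eq_zero ctx hx]
    exact ⟨y0, [], chain_nil x0, chain_nil y0⟩
  · intro x y y' hx h1 h2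
    rw [lvl_eq_zero ctx hx] at h1 h2
    rw [hy0 y h1, hy0 y' h2]
  · intro x y hx hr i w hw
    rw [lvl_eq_zero ctx hx, ctx.hm.1 i] at hw
    cases hw
  · intro x y hx hr i
    rw [lvl_eq_zero ctx hx] at hr
    obtain rfl := hy0 y hr
    rw [lvl_eq_zero ctx hx]
    constructor
    · rw [G.e_none_iff.1 (ctx.hm.1 i), G'.e_none_iff.1 (ctx'.hm.1 i)]
    · exact hphi0 i

theorem ex_step (ctx : Ctx A G x0) {n : ℕ}
    (IH : ∀ m, m ≤ n → OneSide G G' x0 y0 ctx.hm m) :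
    ∀ x, lvl G x0 ctx.hm x = n + 1 → ∃ y, CRel G G' x0 y0 x y := by
  intro x hx
  obtain ⟨w, hw, hwlen⟩ := lvl_word ctx x
  rw [hx] at hwlen
  cases w with
  | nil => simp at hwlen
  | cons a u =>
      obtain ⟨x1, hu, ha⟩ := chain_some_cons hw
      have hl1 : lvl G x0 ctx.hm x1 = n := by
        have := lvl_unique ctx hu
        simp at hwlen
        omega
      obtain ⟨y1, hr1⟩ := (IH n le_rfl).1 x1 hl1
      have hphi1 : G.phi a x1 = G'.phi a y1 :=
        t_phi ctx IH (le_of_eq hl1) hr1 a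
      have hpos : G.phi a x1 ≠ 0 := by
        intro h0
        rw [G.f_none_iff.2 h0] at ha
        cases ha
      obtain ⟨y, hy⟩ := G'.f_some_of_phi (i := a) (x := y1) (by omega)
      obtain ⟨v, hv1, hv2⟩ := hr1
      refine ⟨y, a :: v, ?_, ?_⟩
      · rw [chain_cons, hv1, Option.bind_some]; exact ha
      · rw [chain_cons, hv2, Option.bind_some]; exact hy

theorem fun_step (ctx : Ctx A G x0) (ctx' : Ctx A G' y0) {n : ℕ}
    (IH : ∀ m, m ≤ n → OneSide G G' x0 y0 ctx.hm m) :
    ∀ x y y', lvl G x0 ctx.hm x = n + 1 → CRel G G' x0 y0 x y →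
      CRel G G' x0 y0 x y' → y = y' := by
  intro x y y' hx hy hy'
  obtain ⟨u, hu1, hu2⟩ := hy
  obtain ⟨v, hv1, hv2⟩ := hy'
  have hulen := lvl_word_len ctx hu1 _ hx
  have hvlen := lvl_word_len ctx hv1 _ hx
  cases u with
  | nil => simp at hulen
  | cons b u1 =>
  cases v with
  | nil => simp at hvlen
  | cons c v1 =>
      obtain ⟨x1, hux, hbx⟩ := chain_some_cons hu1
      obtain ⟨y1, huy, hby⟩ := chain_some_cons hu2
      obtain ⟨x2, hvx, hcx⟩ := chain_some_cons hv1
      obtain ⟨y2, hvy, hcy⟩ := chain_some_cons hv2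
      have hr1 : CRel G G' x0 y0 x1 y1 := ⟨u1, hux, huy⟩
      have hr2 : CRel G G' x0 y0 x2 y2 := ⟨v1, hvx, hvy⟩
      have hl1 : lvl G x0 ctx.hm x1 = n := by
        have := lvl_unique ctx hux; simp at hulen; omega
      have hl2 : lvl G x0 ctx.hm x2 = n := by
        have := lvl_unique ctx hvx; simp at hvlen; omega
      by_cases hbc : b = c
      · subst hbc
        obtain rfl := G.f_inj hbx hcx
        have := t_fun ctx IH (le_of_eq hl1) hr1 hr2
        subst this
        rw [hby] at hcy
        exact Option.some.inj hcy
      · have he1 : G.e b x = some x1 := (G.ef b x1 x).2 hbx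
        have he2 : G.e c x = some x2 := (G.ef c x2 x).2 hcx
        have hbig := keyUp ctx.hA ctx.hrk ctx.hreg ctx.hex hbc he1 he2
        have hbig' := transfer_big ctx IH (le_of_eq hl1) (le_of_eq hl2) hr1 hr2 hbig
        obtain ⟨U, hU1, hU2⟩ := bigBwd ctx'.hreg ctx'.hex hbc hbig'
        rw [hby] at hU1
        rw [hcy] at hU2
        rw [Option.some.inj hU1, Option.some.inj hU2]

theorem t6_step (ctx : Ctx A G x0) {n : ℕ}
    (IH : ∀ m, m ≤ n → OneSide G G' x0 y0 ctx.hm m)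
    (hfun : ∀ x y y', lvl G x0 ctx.hm x = n + 1 → CRel G G' x0 y0 x y →
      CRel G G' x0 y0 x y' → y = y') :
    ∀ x y, lvl G x0 ctx.hm x = n + 1 → CRel G G' x0 y0 x y →
      ∀ i w, G.e i x = some w → ∃ z, G'.e i y = some z ∧ CRel G G' x0 y0 w z := by
  intro x y hx hr i w hw
  have hfw : G.f i w = some x := (G.ef i w x).1 hw
  have hlw : lvl G x0 ctx.hm w = n := by have := lvl_e ctx hw; omega
  obtain ⟨z, hrz⟩ := (IH n le_rfl).1 w hlw
  have hphiw : G.phi i w = G'.phi i z := t_phi ctx IH (le_of_eq hlw) hrz i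
  have hpos : G.phi i w ≠ 0 := by
    intro h0
    rw [G.f_none_iff.2 h0] at hfw
    cases hfw
  obtain ⟨yy, hyy⟩ := G'.f_some_of_phi (i := i) (x := z) (by omega)
  have hry : CRel G G' x0 y0 x yy := by
    obtain ⟨v, hv1, hv2⟩ := hrz
    refine ⟨i :: v, ?_, ?_⟩
    · rw [chain_cons, hv1, Option.bind_some]; exact hfw
    · rw [chain_cons, hv2, Option.bind_some]; exact hyy
  obtain rfl := hfun x yy y hx hry hr
  exact ⟨z, (G'.ef i z yy).2 hyy, hrz⟩

theorem t4_step (ctx : Ctx A G x0) (ctx' : Ctx A G' y0)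
    (hphi0 : ∀ i, G.phi i x0 = G'.phi i y0) {n : ℕ}
    (IH : ∀ m, m ≤ n → OneSide G G' x0 y0 ctx.hm m)
    (ht6 : ∀ x y, lvl G x0 ctx.hm x = n + 1 → CRel G G' x0 y0 x y →
      ∀ i w, G.e i x = some w → ∃ z, G'.e i y = some z ∧ CRel G G' x0 y0 w z)
    (ht6' : ∀ y x, lvl G' y0 ctx'.hm y = n + 1 → CRel G' G y0 x0 y x →
      ∀ i z, G'.e i y = some z → ∃ w, G.e i x = some w ∧ CRel G' G y0 x0 z w) :
    ∀ x y, lvl G x0 ctx.hm x = n + 1 → CRel G G' x0 y0 x y →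
      ∀ i, G.eps i x = G'.eps i y ∧ G.phi i x = G'.phi i y := by
  intro x y hx hr i
  have heps : G.eps i x = G'.eps i y := by
    cases hei : G.e i x with
    | some w =>
        obtain ⟨z, hz, hrz⟩ := ht6 x y hx hr i w hei
        have h1 := G.eps_succ hei
        have h2 := G'.eps_succ hz
        have hlw : lvl G x0 ctx.hm w = n := by have := lvl_e ctx hei; omega
        have := t_eps ctx IH (le_of_eq hlw) hrz i
        omega
    | none =>
        have hz : G'.e i y = none := by
          cases hz : G'.e i y with
          | none => rfl
          | some z =>
              exfalso
              have hly : lvl G' y0 ctx'.hm y = n + 1 := by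
                rw [← rel_lvl ctx ctx' hr]; exact hx
              obtain ⟨w, hw, -⟩ := ht6' y x hly (Rel_symm.2 hr) i z hz
              rw [hei] at hw
              cases hw
        rw [G.e_none_iff.1 hei, G'.e_none_iff.1 hz]
  have hmu := mu_rel ctx ctx' hphi0 hr i
  exact ⟨heps, by omega⟩

theorem mainInd (ctx : Ctx A G x0) (ctx' : Ctx A G' y0)
    (hphi0 : ∀ i, G.phi i x0 = G'.phi i y0) :
    ∀ n, OneSide G G' x0 y0 ctx.hm n ∧ OneSide G' G y0 x0 ctx'.hm n := by
  intro n
  induction n using Nat.strong_induction_on with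
  | _ n IH =>
    cases n with
    | zero =>
        exact ⟨base_side ctx ctx' hphi0, base_side ctx' ctx (fun i => (hphi0 i).symm)⟩
    | succ n =>
        have IHself : ∀ m, m ≤ n → OneSide G G' x0 y0 ctx.hm m :=
          fun m hm => (IH m (by omega)).1
        have IHother : ∀ m, m ≤ n → OneSide G' G y0 x0 ctx'.hm m :=
          fun m hm => (IH m (by omega)).2
        have hphi0' : ∀ i, G'.phi i y0 = G.phi i x0 := fun i => (hphi0 i).symm
        have hfun := fun_step ctx ctx' IHself
        have hfun' := fun_step ctx' ctx IHother
        have ht6 := t6_step ctx IHself hfun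
        have ht6' := t6_step ctx' IHother hfun'
        exact ⟨⟨ex_step ctx IHself, hfun, ht6,
          t4_step ctx ctx' hphi0 IHself ht6 ht6'⟩,
          ⟨ex_step ctx' IHother, hfun', ht6',
          t4_step ctx' ctx hphi0' IHother ht6' ht6⟩⟩

end MainInd

theorem stmt_18 {I X Y : Type} [Fintype I] [DecidableEq I]
    (A : I → I → ℤ) (hA : IsGCM A) (hsym : IsSymmetrizable A) (hrk : Rank2OK A)
    (G : GoodGraph I X) (G' : GoodGraph I Y)
    (hreg : ARegular A G) (hreg' : ARegular A G')
    (hextra : ExtraB2 A G) (hextra' : ExtraB2 A G')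
    (x0 : X) (y0 : Y) (hmax : IsMaxElem G x0) (hmax' : IsMaxElem G' y0)
    (hphi : ∀ i : I, G.phi i x0 = G'.phi i y0) :
    ∃! h : X → Y, Function.Bijective h ∧
      ∀ (i : I) (x y : X), G.f i x = some y ↔ G'.f i (h x) = some (h y) := by
  classical
  have ctx : Ctx A G x0 := ⟨hA, hrk, hreg, hextra, hmax⟩
  have ctx' : Ctx A G' y0 := ⟨hA, hrk, hreg', hextra', hmax'⟩
  have main := mainInd ctx ctx' hphi
  have hexist : ∀ x : X, ∃ y, CRel G G' x0 y0 x y :=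
    fun x => ((main _).1).1 x rfl
  have hexist' : ∀ y : Y, ∃ x, CRel G G' x0 y0 x y := by
    intro y
    obtain ⟨x, hx⟩ := ((main _).2).1 y rfl
    exact ⟨x, Rel_symm.1 hx⟩
  have hfun : ∀ (x : X) (y y' : Y), CRel G G' x0 y0 x y → CRel G G' x0 y0 x y' →
      y = y' := fun x y y' h1 h2 => ((main _).1).2.1 x y y' rfl h1 h2
  have hinj : ∀ (y : Y) (x x' : X), CRel G G' x0 y0 x y → CRel G G' x0 y0 x' y →
      x = x' := fun y x x' h1 h2 =>
    ((main _).2).2.1 y x x' rfl (Rel_symm.2 h1) (Rel_symm.2 h2)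
  have hphiAll : ∀ (x : X) (y : Y), CRel G G' x0 y0 x y →
      ∀ i, G.phi i x = G'.phi i y :=
    fun x y hr i => (((main _).1).2.2.2 x y rfl hr i).2
  set h : X → Y := fun x => (hexist x).choose with hdef
  have hrh : ∀ x, CRel G G' x0 y0 x (h x) := fun x => (hexist x).choose_spec
  -- forward compatibility
  have hcompat : ∀ (i : I) (x y : X), G.f i x = some y → G'.f i (h x) = some (h y) := by
    intro i x y hf
    have hpos : G.phi i x ≠ 0 := by
      intro h0
      rw [G.f_none_iff.2 h0] at hf
      cases hf
    have hphix := hphiAll x (h x) (hrh x) i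
    obtain ⟨Y1, hY1⟩ := G'.f_some_of_phi (i := i) (x := h x) (by omega)
    obtain ⟨v, hv1, hv2⟩ := hrh x
    have hrY1 : CRel G G' x0 y0 y Y1 := by
      refine ⟨i :: v, ?_, ?_⟩
      · rw [chain_cons, hv1, Option.bind_some]; exact hf
      · rw [chain_cons, hv2, Option.bind_some]; exact hY1
    rw [hY1, hfun y Y1 (h y) hrY1 (hrh y)]
  -- backward compatibility
  have hcompat' : ∀ (i : I) (x y : X), G'.f i (h x) = some (h y) → G.f i x = some y := by
    intro i x y hf
    have he : G'.e i (h y) = some (h x) := (G'.ef i (h x) (h y)).2 hf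
    obtain ⟨w, hw, hrw⟩ :=
      ((main _).2).2.2.1 (h y) y rfl (Rel_symm.2 (hrh y)) i (h x) he
    have : w = x := hinj (h x) w x (Rel_symm.1 hrw) (hrh x)
    rw [this] at hw
    exact (G.ef i x y).1 hw
  have hbij : Function.Bijective h := by
    constructor
    · intro x x' hxx
      exact hinj (h x) x x' (hrh x) (hxx ▸ hrh x')
    · intro y
      obtain ⟨x, hr⟩ := hexist' y
      exact ⟨x, hfun x (h x) y (hrh x) hr⟩
  have hy0unique : ∀ z : Y, (∀ i, G'.e i z = none) → z = y0 := by
    intro z hz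
    obtain ⟨v, hv⟩ := hmax'.2 z
    cases v with
    | nil => exact (Option.some.inj hv).symm
    | cons a v1 =>
        obtain ⟨m, hm', ha⟩ := chain_some_cons hv
        have := (G'.ef a m z).2 ha
        rw [hz a] at this
        cases this
  have hx0 : h x0 = y0 := by
    obtain ⟨v, hv1, hv2⟩ := hrh x0
    have hlen := lvl_word_len ctx hv1 0 (lvl_zero ctx)
    rw [List.length_eq_zero_iff.1 hlen, chain_nil] at hv2
    exact (Option.some.inj hv2).symm
  refine ⟨h, ⟨hbij, ?_⟩, ?_⟩
  · intro i x y
    constructor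
    · exact hcompat i x y
    · exact hcompat' i x y
  · -- uniqueness
    intro h2 ⟨hbij2, hcomp2⟩
    have hx02 : h2 x0 = y0 := by
      apply hy0unique
      intro a
      cases hea : G'.e a (h2 x0) with
      | none => rfl
      | some z =>
          exfalso
          obtain ⟨u, hu⟩ := hbij2.2 z
          rw [← hu] at hea
          have hfz : G'.f a (h2 u) = some (h2 x0) := (G'.ef a (h2 u) (h2 x0)).1 hea
          have := (hcomp2 a u x0).2 hfz
          have he := (G.ef a u x0).2 this
          rw [hmax.1 a] at he
          cases he
    have key : ∀ (w : List I) (x : X), chainOpt G.f w x0 = some x → h2 x = h x := by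
      intro w
      induction w with
      | nil =>
          intro x hx
          rw [chain_nil] at hx
          obtain rfl := Option.some.inj hx
          rw [hx02, hx0]
      | cons a t ih =>
          intro x hx
          obtain ⟨m, hm', ha⟩ := chain_some_cons hx
          have h1 : G'.f a (h2 m) = some (h2 x) := (hcomp2 a m x).1 ha
          have h3 : G'.f a (h m) = some (h x) := hcompat a m x ha
          rw [ih m hm'] at h1
          rw [h1] at h3
          exact Option.some.inj h3
    funext x
    obtain ⟨w, hw⟩ := hmax.2 x
    exact key w x hw
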